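/- (Deterministic error bounds.) Let X ∈ ℝ^{n×p}, β* ∈ ℝ^p with s* = ‖β*‖₀, and y = Xβ* + ε for some ε ∈ ℝⁿ. Let δ ≥ 0 and suppose ‖Xᵀε‖∞ ≤ δ. Suppose β̂ ∈ ℝ^p satisfies ‖Xᵀ(y − Xβ̂)‖∞ ≤ δ and ‖β̂‖₀ ≤ s*, and that γ(2s*) > 0. Then: ‖β̂ − β*‖₁ ≤ 4 [γ(2s*)]⁻² s* δ; ‖β̂ − β*‖₂² ≤ 8 [γ(2s*)]⁻⁴ s* δ²; and ‖X(β̂ − β*)‖₂² ≤ 8 [γ(2s*)]⁻² s* δ². -/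
import Mathlib


noncomputable section
open Classical

/-- The ℓ₀ "norm": number of nonzero entries. -/
def l0 {p : ℕ} (β : Fin p → ℝ) : ℕ := (Finset.univ.filter fun i => β i ≠ 0).card

/-- ℓ₁-norm. -/
def l1 {p : ℕ} (β : Fin p → ℝ) : ℝ := ∑ i, |β i|

/-- Squared Euclidean norm. -/
def l2sq {q : ℕ} (v : Fin q → ℝ) : ℝ := ∑ i, (v i) ^ 2

/-- Euclidean norm. -/
def l2 {q : ℕ} (v : Fin q → ℝ) : ℝ := Real.sqrt (l2sq v)

/-- `γ(k) = min{ ‖Xθ‖₂/‖θ‖₂ : θ ≠ 0, ‖θ‖₀ ≤ k }`. -/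
def gammaX {n p : ℕ} (X : Matrix (Fin n) (Fin p) ℝ) (k : ℕ) : ℝ :=
  sInf {r : ℝ | ∃ θ : Fin p → ℝ, θ ≠ 0 ∧ l0 θ ≤ k ∧ r = l2 (X.mulVec θ) / l2 θ}

lemma l2sq_nonneg {q : ℕ} (v : Fin q → ℝ) : 0 ≤ l2sq v :=
  Finset.sum_nonneg fun i _ => sq_nonneg _

lemma l2_sq {q : ℕ} (v : Fin q → ℝ) : l2 v * l2 v = l2sq v :=
  Real.mul_self_sqrt (l2sq_nonneg v)

lemma l0_sub_le {p : ℕ} (a b : Fin p → ℝ) : l0 (a - b) ≤ l0 a + l0 b := by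
  classical
  have hsub : (Finset.univ.filter fun i => (a - b) i ≠ 0) ⊆
      (Finset.univ.filter fun i => a i ≠ 0) ∪ (Finset.univ.filter fun i => b i ≠ 0) := by
    intro i hi
    simp only [Finset.mem_filter, Finset.mem_union, Finset.mem_univ, true_and] at *
    by_contra hc
    push_neg at hc
    simp [Pi.sub_apply, hc.1, hc.2] at hi
  calc l0 (a - b) ≤ ((Finset.univ.filter fun i => a i ≠ 0) ∪
        (Finset.univ.filter fun i => b i ≠ 0)).card := Finset.card_le_card hsub
    _ ≤ l0 a + l0 b := Finset.card_union_le _ _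

lemma l1_le_sqrt_l0_mul_l2 {p : ℕ} (v : Fin p → ℝ) :
    l1 v ≤ Real.sqrt (l0 v) * l2 v := by
  classical
  set S := Finset.univ.filter fun i => v i ≠ 0 with hS
  have h1 : l1 v = ∑ i ∈ S, |v i| := by
    rw [l1, ← Finset.sum_filter_ne_zero]
    apply Finset.sum_congr
    · ext i; simp [hS, abs_ne_zero]
    · intros; rfl
  have h2 : l2sq v = ∑ i ∈ S, (v i) ^ 2 := by
    rw [l2sq, ← Finset.sum_filter_ne_zero]
    apply Finset.sum_congr
    · ext i; simp [hS, pow_eq_zero_iff]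
    · intros; rfl
  have key : (∑ i ∈ S, |v i|) ^ 2 ≤ (S.card : ℝ) * ∑ i ∈ S, |v i| ^ 2 :=
    sq_sum_le_card_mul_sum_sq
  have habs : ∀ i, |v i| ^ 2 = (v i) ^ 2 := fun i => sq_abs _
  have key' : l1 v ^ 2 ≤ (l0 v : ℝ) * l2sq v := by
    rw [h1, h2, l0, ← hS]
    simpa [habs] using key
  have hnn : 0 ≤ l1 v := Finset.sum_nonneg fun i _ => abs_nonneg _
  have h3 : l1 v = Real.sqrt (l1 v ^ 2) := (Real.sqrt_sq hnn).symm
  rw [h3]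
  calc Real.sqrt (l1 v ^ 2) ≤ Real.sqrt ((l0 v : ℝ) * l2sq v) := Real.sqrt_le_sqrt key'
    _ = Real.sqrt (l0 v) * l2 v := by
        rw [Real.sqrt_mul (Nat.cast_nonneg _), l2]

lemma gammaX_le {n p : ℕ} (X : Matrix (Fin n) (Fin p) ℝ) (k : ℕ)
    (θ : Fin p → ℝ) (hθ : θ ≠ 0) (h0 : l0 θ ≤ k) :
    gammaX X k ≤ l2 (X.mulVec θ) / l2 θ := by
  apply csInf_le
  · refine ⟨0, ?_⟩
    rintro r ⟨φ, _, _, rfl⟩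
    exact div_nonneg (Real.sqrt_nonneg _) (Real.sqrt_nonneg _)
  · exact ⟨θ, hθ, h0, rfl⟩

set_option maxHeartbeats 1000000 in
/-- Deterministic error bounds: if `‖Xᵀε‖∞ ≤ δ`,
`‖Xᵀ(y − Xβ̂)‖∞ ≤ δ`, `‖β̂‖₀ ≤ s*` and `γ(2s*) > 0`, then the ℓ₁, ℓ₂ and
prediction error bounds hold. -/
theorem stmt5 {n p : ℕ} (X : Matrix (Fin n) (Fin p) ℝ)
    (βstar : Fin p → ℝ) (s : ℕ) (hs : s = l0 βstar)
    (ε : Fin n → ℝ) (y : Fin n → ℝ) (hy : y = X.mulVec βstar + ε)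
    (δ : ℝ) (hδ0 : 0 ≤ δ)
    (hε : ∀ j, |X.transpose.mulVec ε j| ≤ δ)
    (βhat : Fin p → ℝ)
    (hfeas : ∀ j, |X.transpose.mulVec (y - X.mulVec βhat) j| ≤ δ)
    (hsparse : l0 βhat ≤ s)
    (hγ : 0 < gammaX X (2 * s)) :
    l1 (βhat - βstar) ≤ 4 * ((gammaX X (2 * s)) ^ 2)⁻¹ * s * δ ∧
    l2sq (βhat - βstar) ≤ 8 * ((gammaX X (2 * s)) ^ 4)⁻¹ * s * δ ^ 2 ∧
    l2sq (X.mulVec (βhat - βstar)) ≤ 8 * ((gammaX X (2 * s)) ^ 2)⁻¹ * s * δ ^ 2 := by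
  classical
  set g := gammaX X (2 * s) with hgdef
  set h : Fin p → ℝ := βhat - βstar with hh
  by_cases h0 : h = 0
  · refine ⟨?_, ?_, ?_⟩
    · have e1 : l1 (0 : Fin p → ℝ) = 0 := by simp [l1]
      rw [h0, e1]; positivity
    · have e2 : l2sq (0 : Fin p → ℝ) = 0 := by simp [l2sq]
      rw [h0, e2]; positivity
    · have e2 : l2sq (0 : Fin n → ℝ) = 0 := by simp [l2sq]
      rw [h0, Matrix.mulVec_zero, e2]; positivity
  -- sparsity of h
  have hl0 : l0 h ≤ 2 * s := by
    calc l0 h ≤ l0 βhat + l0 βstar := l0_sub_le _ _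
      _ ≤ s + s := add_le_add hsparse (le_of_eq hs.symm)
      _ = 2 * s := by ring
  -- bound on ‖XᵀXh‖∞
  have hw : ∀ j, |X.transpose.mulVec (X.mulVec h) j| ≤ 2 * δ := by
    intro j
    have hsplit : X.mulVec h = ε - (y - X.mulVec βhat) := by
      rw [hh, Matrix.mulVec_sub, hy]; abel
    have : X.transpose.mulVec (X.mulVec h) j =
        X.transpose.mulVec ε j - X.transpose.mulVec (y - X.mulVec βhat) j := by
      rw [hsplit, Matrix.mulVec_sub]; simp
    rw [this]
    calc |X.transpose.mulVec ε j - X.transpose.mulVec (y - X.mulVec βhat) j|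
        ≤ |X.transpose.mulVec ε j| + |X.transpose.mulVec (y - X.mulVec βhat) j| :=
          abs_sub _ _
      _ ≤ δ + δ := add_le_add (hε j) (hfeas j)
      _ = 2 * δ := by ring
  -- P = l2sq (Xh) = ∑ h j * (XᵀXh) j
  have hP : l2sq (X.mulVec h) = ∑ j, h j * X.transpose.mulVec (X.mulVec h) j := by
    have : l2sq (X.mulVec h) = dotProduct (X.mulVec h) (X.mulVec h) := by
      simp [l2sq, dotProduct, sq]
    rw [this]
    have e : dotProduct h (X.transpose.mulVec (X.mulVec h)) =
        dotProduct (X.mulVec h) (X.mulVec h) := by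
      rw [Matrix.dotProduct_mulVec, Matrix.vecMul_transpose]
    rw [← e]
    rfl
  have hPle : l2sq (X.mulVec h) ≤ 2 * δ * l1 h := by
    rw [hP]
    calc ∑ j, h j * X.transpose.mulVec (X.mulVec h) j
        ≤ ∑ j, |h j| * (2 * δ) := by
          apply Finset.sum_le_sum
          intro j _
          calc h j * X.transpose.mulVec (X.mulVec h) j
              ≤ |h j * X.transpose.mulVec (X.mulVec h) j| := le_abs_self _
            _ = |h j| * |X.transpose.mulVec (X.mulVec h) j| := abs_mul _ _
            _ ≤ |h j| * (2 * δ) := mul_le_mul_of_nonneg_left (hw j) (abs_nonneg _)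
      _ = 2 * δ * l1 h := by rw [l1, ← Finset.sum_mul]; ring
  -- gamma bound
  have ha : 0 < l2 h := by
    have : l2sq h ≠ 0 := by
      intro hz
      apply h0
      funext i
      have := (Finset.sum_eq_zero_iff_of_nonneg (fun i _ => sq_nonneg (h i))).1 hz i
        (Finset.mem_univ i)
      exact pow_eq_zero_iff (n := 2) (by norm_num) |>.1 this
    exact Real.sqrt_pos.2 (lt_of_le_of_ne (l2sq_nonneg h) (Ne.symm this))
  have hgle : g * l2 h ≤ l2 (X.mulVec h) := by
    have := gammaX_le X (2 * s) h h0 hl0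
    rw [← hgdef] at this
    calc g * l2 h ≤ (l2 (X.mulVec h) / l2 h) * l2 h :=
      mul_le_mul_of_nonneg_right this (le_of_lt ha)
      _ = l2 (X.mulVec h) := div_mul_cancel₀ _ (ne_of_gt ha)
  have hg2 : g ^ 2 * l2sq h ≤ l2sq (X.mulVec h) := by
    have := mul_self_le_mul_self (mul_nonneg (le_of_lt hγ) (le_of_lt ha)) hgle
    calc g ^ 2 * l2sq h = (g * l2 h) * (g * l2 h) := by rw [← l2_sq]; ring
      _ ≤ l2 (X.mulVec h) * l2 (X.mulVec h) := this
      _ = l2sq (X.mulVec h) := l2_sq _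
  -- Cauchy–Schwarz
  set c := Real.sqrt (2 * (s : ℝ)) with hc
  have hc0 : 0 ≤ c := Real.sqrt_nonneg _
  have hcc : c * c = 2 * (s : ℝ) := Real.mul_self_sqrt (by positivity)
  have hL1 : l1 h ≤ c * l2 h := by
    have hcast : ((l0 h : ℝ)) ≤ 2 * (s : ℝ) := by
      exact_mod_cast hl0
    calc l1 h ≤ Real.sqrt (l0 h) * l2 h := l1_le_sqrt_l0_mul_l2 h
      _ ≤ c * l2 h :=
        mul_le_mul_of_nonneg_right (Real.sqrt_le_sqrt hcast) (le_of_lt ha)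
  -- key chain: g^2 * l2 h ≤ 2δ c
  have key : g ^ 2 * l2 h ≤ 2 * δ * c := by
    have chain : g ^ 2 * (l2 h * l2 h) ≤ 2 * δ * (c * l2 h) := by
      calc g ^ 2 * (l2 h * l2 h) = g ^ 2 * l2sq h := by rw [l2_sq]
        _ ≤ l2sq (X.mulVec h) := hg2
        _ ≤ 2 * δ * l1 h := hPle
        _ ≤ 2 * δ * (c * l2 h) := mul_le_mul_of_nonneg_left hL1 (by positivity)
    have := mul_le_mul_of_nonneg_right (le_of_eq (rfl : g ^ 2 * l2 h = g ^ 2 * l2 h)) (le_of_lt ha)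
    nlinarith [ha]
  have hg2pos : (0:ℝ) < g ^ 2 := by positivity
  have hg4pos : (0:ℝ) < g ^ 4 := by positivity
  have hA : l2 h * l2 h = l2sq h := l2_sq h
  refine ⟨?_, ?_, ?_⟩
  · -- l1 bound
    have h1 : g ^ 2 * l1 h ≤ 4 * s * δ := by
      calc g ^ 2 * l1 h ≤ g ^ 2 * (c * l2 h) :=
          mul_le_mul_of_nonneg_left hL1 (le_of_lt hg2pos)
        _ = c * (g ^ 2 * l2 h) := by ring
        _ ≤ c * (2 * δ * c) := mul_le_mul_of_nonneg_left key hc0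
        _ = 4 * s * δ := by nlinarith [hcc]
    rw [show (4:ℝ) * (g ^ 2)⁻¹ * s * δ = (4 * s * δ) / g ^ 2 by ring,
      le_div_iff₀ hg2pos]
    nlinarith [h1]
  · -- l2sq bound
    have hsq : (g ^ 2 * l2 h) * (g ^ 2 * l2 h) ≤ (2 * δ * c) * (2 * δ * c) :=
      mul_self_le_mul_self (by positivity) key
    have h2 : g ^ 4 * l2sq h ≤ 8 * s * δ ^ 2 := by nlinarith [hcc, hA]
    rw [show (8:ℝ) * (g ^ 4)⁻¹ * s * δ ^ 2 = (8 * s * δ ^ 2) / g ^ 4 by ring,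
      le_div_iff₀ hg4pos]
    nlinarith [h2]
  · -- prediction bound
    have h3 : g ^ 2 * l2sq (X.mulVec h) ≤ 8 * s * δ ^ 2 := by
      have step : g ^ 2 * l2sq (X.mulVec h) ≤ g ^ 2 * (2 * δ * l1 h) :=
        mul_le_mul_of_nonneg_left hPle (le_of_lt hg2pos)
      have h1 : g ^ 2 * l1 h ≤ 4 * s * δ := by
        calc g ^ 2 * l1 h ≤ g ^ 2 * (c * l2 h) :=
            mul_le_mul_of_nonneg_left hL1 (le_of_lt hg2pos)
          _ = c * (g ^ 2 * l2 h) := by ring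
          _ ≤ c * (2 * δ * c) := mul_le_mul_of_nonneg_left key hc0
          _ = 4 * s * δ := by nlinarith [hcc]
      nlinarith [step, h1]
    rw [show (8:ℝ) * (g ^ 2)⁻¹ * s * δ ^ 2 = (8 * s * δ ^ 2) / g ^ 2 by ring,
      le_div_iff₀ hg2pos]
    nlinarith [h3]
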